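/- Let n ≥ 1 and let A, ν, W_t, 𝒜_t and Π_ν be as in the context. Then the rescaled amoebas (1/log t)·𝒜_t converge to the tropical amoeba Π_ν in the Hausdorff sense: for every ε > 0 there exists t₀ > 1 such that for all t ≥ t₀, every point of 𝒜_t lies within Euclidean distance ε·log t of the set (log t)·Π_ν = {(log t)·v : v ∈ Π_ν}, and every point of (log t)·Π_ν lies within Euclidean distance ε·log t of 𝒜_t. -/

import Mathlib

open scoped BigOperators

/-- The Laurent monomial `z^α = z₁^{a₁} ⋯ zₙ^{aₙ}` with integer exponents. -/
noncomputable def laurentMonomial {n : ℕ} (α : Fin n → ℤ) (z : Fin n → ℂ) : ℂ :=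
  ∏ i, z i ^ α i

/-- The Laurent polynomial `W_t(z) = -1 + ∑_{α ∈ A, α ≠ 0} t^{-ν(α)} z^α`. -/
noncomputable def Wfam {n : ℕ} (A : Finset (Fin n → ℤ)) (ν : (Fin n → ℤ) → ℝ)
    (t : ℝ) (z : Fin n → ℂ) : ℂ :=
  -1 + ∑ α ∈ A.filter (fun α => α ≠ 0), ((t ^ (-ν α) : ℝ) : ℂ) * laurentMonomial α z

/-- The logarithm map `Log(z) = (log |z₁|, …, log |zₙ|)`, valued in Euclidean space. -/
noncomputable def LogMap {n : ℕ} (z : Fin n → ℂ) : EuclideanSpace ℝ (Fin n) :=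
  WithLp.toLp 2 (fun i => Real.log ‖z i‖)

/-- The tropical amoeba `Π_ν`: points where `max_{α ∈ A} (⟨u, α⟩ - ν(α))` is attained
by at least two elements of `A`. -/
def tropAmoeba {n : ℕ} (A : Finset (Fin n → ℤ)) (ν : (Fin n → ℤ) → ℝ) :
    Set (EuclideanSpace ℝ (Fin n)) :=
  {u | ∃ α ∈ A, ∃ β ∈ A, α ≠ β ∧
      (∑ i, u i * (α i : ℝ)) - ν α = (∑ i, u i * (β i : ℝ)) - ν β ∧
      ∀ γ ∈ A, (∑ i, u i * (γ i : ℝ)) - ν γ ≤ (∑ i, u i * (α i : ℝ)) - ν α}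

noncomputable def Complex.abs : AbsoluteValue ℂ ℝ :=
  IsAbsoluteValue.toAbsoluteValue (norm : ℂ → ℝ)

@[simp]
lemma Complex.abs_ofReal (r : ℝ) : Complex.abs (r : ℂ) = |r| := by
  show ‖(r : ℂ)‖ = |r|
  simp

namespace Stmt1Aux

open Polynomial

variable {n : ℕ}


lemma zpow_finset_sum (w : ℂ) (hw : w ≠ 0) {ι : Type*} (s : Finset ι) (k : ι → ℤ) :
    w ^ (∑ i ∈ s, k i) = ∏ i ∈ s, w ^ k i := by
  classical
  induction s using Finset.induction with
  | empty => simp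
  | @insert a s h ih => rw [Finset.sum_insert h, Finset.prod_insert h, zpow_add₀ hw, ih]

lemma rpow_finset_sum (t : ℝ) (ht : 0 < t) {ι : Type*} (s : Finset ι) (k : ι → ℝ) :
    t ^ (∑ i ∈ s, k i) = ∏ i ∈ s, t ^ k i := by
  classical
  induction s using Finset.induction with
  | empty => simp
  | @insert a s h ih => rw [Finset.sum_insert h, Finset.prod_insert h, Real.rpow_add ht, ih]

/-- Existence of a generic integer direction separating all inner products on a finite set. -/
lemma exists_generic (n : ℕ) (A : Finset (Fin n → ℤ)) :
    ∃ e : Fin n → ℤ, ∀ γ ∈ A, ∀ δ ∈ A, γ ≠ δ →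
      (∑ i, e i * γ i) ≠ (∑ i, e i * δ i) := by
  classical
  -- polynomial for a single difference vector
  let q : (Fin n → ℤ) → Polynomial ℤ := fun d => ∑ i, Polynomial.C (d i) * Polynomial.X ^ (i : ℕ)
  have hqcoeff : ∀ d : (Fin n → ℤ), ∀ j : Fin n, (q d).coeff (j : ℕ) = d j := by
    intro d j
    rw [Polynomial.finset_sum_coeff]
    rw [Finset.sum_eq_single j]
    · simp
    · intro b _ hbj
      simp only [Polynomial.coeff_C_mul, Polynomial.coeff_X_pow]
      rw [if_neg (fun h => hbj (Fin.val_injective h.symm)), mul_zero]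
    · simp
  have hqne : ∀ d : (Fin n → ℤ), d ≠ 0 → q d ≠ 0 := by
    intro d hd
    obtain ⟨j, hj⟩ := Function.ne_iff.mp hd
    intro h
    apply hj
    have := hqcoeff d j
    rw [h] at this
    simpa using this.symm
  -- the product over all pairs
  let D : Finset (Fin n → ℤ) := ((A ×ˢ A).filter (fun p => p.1 ≠ p.2)).image (fun p => p.1 - p.2)
  let p : Polynomial ℤ := ∏ d ∈ D, q d
  have hdne : ∀ d ∈ D, d ≠ 0 := by
    intro d hd
    simp only [D, Finset.mem_image, Finset.mem_filter] at hd
    obtain ⟨pr, ⟨_, hne⟩, rfl⟩ := hd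
    exact sub_ne_zero_of_ne hne
  have hpne : p ≠ 0 := Finset.prod_ne_zero_iff.mpr (fun d hd => hqne d (hdne d hd))
  obtain ⟨B, hB⟩ := Infinite.exists_notMem_finset p.roots.toFinset
  refine ⟨fun i => B ^ (i : ℕ), ?_⟩
  intro γ hγ δ hδ hne heq
  have hmem : γ - δ ∈ D := by
    simp only [D, Finset.mem_image, Finset.mem_filter]
    exact ⟨(γ, δ), ⟨Finset.mem_product.mpr ⟨hγ, hδ⟩, hne⟩, rfl⟩
  have heval : (q (γ - δ)).eval B = 0 := by
    simp only [q, Polynomial.eval_finset_sum, Polynomial.eval_mul, Polynomial.eval_C,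
      Polynomial.eval_pow, Polynomial.eval_X]
    have h2 : ∑ i : Fin n, (γ - δ) i * B ^ (i : ℕ)
        = (∑ i : Fin n, B ^ (i:ℕ) * γ i) - (∑ i : Fin n, B ^ (i:ℕ) * δ i) := by
      rw [← Finset.sum_sub_distrib]
      refine Finset.sum_congr rfl (fun i _ => by simp only [Pi.sub_apply]; ring)
    rw [h2]
    simp only at heq
    rw [heq, sub_self]
  have : p.eval B = 0 := by
    rw [Polynomial.eval_prod]
    exact Finset.prod_eq_zero hmem heval
  apply hB
  rw [Multiset.mem_toFinset, Polynomial.mem_roots hpne]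
  exact this



variable {n : ℕ}

noncomputable def tf (ν : (Fin n → ℤ) → ℝ) (γ : Fin n → ℤ) (u : EuclideanSpace ℝ (Fin n)) : ℝ :=
  (∑ i, u i * (γ i : ℝ)) - ν γ

lemma tf_add_smul (ν : (Fin n → ℤ) → ℝ) (γ : Fin n → ℤ) (v : EuclideanSpace ℝ (Fin n))
    (s : ℝ) (ee : EuclideanSpace ℝ (Fin n)) :
    tf ν γ (v + s • ee) = tf ν γ v + s * ∑ i, ee i * (γ i : ℝ) := by
  simp only [tf]
  have h : ∀ i, (v + s • ee) i = v i + s * ee i := fun i => rfl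
  simp only [h, add_mul]
  rw [Finset.sum_add_distrib, Finset.mul_sum]
  have h2 : ∀ i ∈ Finset.univ, s * ee i * (γ i : ℝ) = s * (ee i * (γ i : ℝ)) :=
    fun i _ => by ring
  rw [Finset.sum_congr rfl h2]
  ring

lemma near_trop (A : Finset (Fin n → ℤ)) (ν : (Fin n → ℤ) → ℝ)
    (v : EuclideanSpace ℝ (Fin n)) (α β : Fin n → ℤ) (hαA : α ∈ A) (hβA : β ∈ A)
    (hαβ : α ≠ β) (δ : ℝ)
    (hmax : ∀ γ ∈ A, tf ν γ v ≤ tf ν α v) (hclose : tf ν α v - tf ν β v ≤ δ) :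
    ∃ w ∈ tropAmoeba A ν, dist v w ≤ δ := by
  classical
  set ee : EuclideanSpace ℝ (Fin n) := WithLp.toLp 2 (fun i => ((β i : ℝ) - (α i : ℝ))) with hee
  set ip : (Fin n → ℤ) → ℝ := fun γ => ∑ i, ee i * (γ i : ℝ) with hip
  have hc_eq : ip β - ip α = ∑ i, ee i * ee i := by
    rw [hip, ← Finset.sum_sub_distrib]
    exact Finset.sum_congr rfl (fun i _ => by simp only [hee, PiLp.toLp_apply]; ring)
  set c : ℝ := ∑ i, ee i * ee i with hc
  have hcnn : ∀ i ∈ Finset.univ, (0:ℝ) ≤ ee i * ee i := fun i _ => mul_self_nonneg _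
  have hc1 : 1 ≤ c := by
    obtain ⟨j, hj⟩ := Function.ne_iff.mp hαβ
    have hj' : (β j - α j : ℤ) ≠ 0 := sub_ne_zero_of_ne (Ne.symm hj)
    have h1 : (1:ℤ) ≤ (β j - α j) * (β j - α j) := by
      rcases hj'.lt_or_gt with h | h
      · nlinarith
      · nlinarith
    have h2 : (1:ℝ) ≤ ee j * ee j := by
      have h3 : ((1:ℤ):ℝ) ≤ (((β j - α j) * (β j - α j) : ℤ) : ℝ) := Int.cast_le.mpr h1
      push_cast at h3
      simpa [hee] using h3
    calc (1:ℝ) ≤ ee j * ee j := h2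
    _ ≤ c := Finset.single_le_sum hcnn (Finset.mem_univ j)
  have hc0 : (0:ℝ) < c := by linarith
  have hΔ0 : 0 ≤ tf ν α v - tf ν β v := by linarith [hmax β hβA]
  have hδ0 : 0 ≤ δ := le_trans hΔ0 hclose
  set Δ : ℝ := tf ν α v - tf ν β v with hΔ
  set s₁ : ℝ := Δ / c with hs₁
  have hs₁0 : 0 ≤ s₁ := div_nonneg hΔ0 hc0.le
  set p : ℝ → EuclideanSpace ℝ (Fin n) := fun s => v + s • ee with hp
  have hg : ∀ γ s, tf ν γ (p s) = tf ν γ v + s * ip γ := fun γ s => tf_add_smul ν γ v s ee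
  set S : Set ℝ := {s | s ∈ Set.Icc 0 s₁ ∧ ∀ γ ∈ A, tf ν γ (p s) ≤ tf ν α (p s)} with hSdef
  have hp0 : p 0 = v := by simp [hp]
  have hS0 : (0:ℝ) ∈ S := ⟨⟨le_refl 0, hs₁0⟩, by rw [hp0]; exact hmax⟩
  have hSclosed : IsClosed S := by
    have : S = Set.Icc 0 s₁ ∩ ⋂ γ ∈ (A : Set (Fin n → ℤ)), {s | tf ν γ (p s) ≤ tf ν α (p s)} := by
      ext s
      simp only [hSdef, Set.mem_setOf_eq, Set.mem_inter_iff, Set.mem_iInter, Finset.mem_coe]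
    rw [this]
    refine IsClosed.inter isClosed_Icc (isClosed_biInter (fun γ _ => ?_))
    have hcont : ∀ γ' : Fin n → ℤ, Continuous (fun s => tf ν γ' (p s)) := by
      intro γ'
      simp only [hg]
      fun_prop
    exact isClosed_le (hcont γ) (hcont α)
  have hbdd : BddAbove S := ⟨s₁, fun x hx => hx.1.2⟩
  set s' := sSup S with hs'
  have hs'S : s' ∈ S := hSclosed.csSup_mem ⟨0, hS0⟩ hbdd
  have hs'0 : 0 ≤ s' := hs'S.1.1
  have key : ∃ γ ∈ A, γ ≠ α ∧ tf ν γ (p s') = tf ν α (p s') := by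
    rcases eq_or_lt_of_le hs'S.1.2 with heq | hlt
    · refine ⟨β, hβA, Ne.symm hαβ, ?_⟩
      have e1 := hg β s'
      have e2 := hg α s'
      have : tf ν β (p s') - tf ν α (p s') = -Δ + s' * (ip β - ip α) := by
        rw [e1, e2]; simp only [hΔ]; ring
      rw [hc_eq] at this
      rw [heq] at this ⊢
      have h5 : tf ν β (p s₁) - tf ν α (p s₁) = 0 := by
        rw [this, hs₁]; field_simp; ring
      linarith [h5]
    · set U : Set ℝ := ⋃ γ ∈ A.erase α, {s | tf ν α (p s) ≤ tf ν γ (p s)} with hU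
      have hsub : Set.Ioc s' s₁ ⊆ U := by
        intro s hs
        have hsnotS : s ∉ S := fun h => (not_lt.mpr (le_csSup hbdd h)) hs.1
        have h3 : ¬ (∀ γ ∈ A, tf ν γ (p s) ≤ tf ν α (p s)) :=
          fun h => hsnotS ⟨⟨le_trans hs'0 hs.1.le, hs.2⟩, h⟩
        push_neg at h3
        obtain ⟨γ, hγA, hγ⟩ := h3
        have hγα : γ ≠ α := by rintro rfl; exact absurd (le_refl _) (not_le.mpr hγ)
        exact Set.mem_biUnion (by exact_mod_cast Finset.mem_erase.mpr ⟨hγα, hγA⟩) (le_of_lt hγ)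
      have hUclosed : IsClosed U := by
        refine Set.Finite.isClosed_biUnion (Finset.finite_toSet _) (fun γ _ => ?_)
        have hcont : ∀ γ' : Fin n → ℤ, Continuous (fun s => tf ν γ' (p s)) := by
          intro γ'
          simp only [hg]
          fun_prop
        exact isClosed_le (hcont α) (hcont γ)
      have hmemcl : s' ∈ closure (Set.Ioc s' s₁) := by
        rw [closure_Ioc (ne_of_lt hlt)]
        exact ⟨le_refl _, hlt.le⟩
      have hs'U : s' ∈ U := by
        have h6 := closure_mono hsub
        rw [hUclosed.closure_eq] at h6
        exact h6 hmemcl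
      obtain ⟨γ, hγmem, hγle⟩ := Set.mem_iUnion₂.mp hs'U
      exact ⟨γ, Finset.mem_of_mem_erase hγmem, Finset.ne_of_mem_erase hγmem,
        le_antisymm (hs'S.2 γ (Finset.mem_of_mem_erase hγmem)) hγle⟩
  obtain ⟨γ, hγA, hγα, hγeq⟩ := key
  refine ⟨p s', ⟨α, hαA, γ, hγA, Ne.symm hγα, hγeq.symm, fun γ' hγ' => hs'S.2 γ' hγ'⟩, ?_⟩
  have hdist : dist v (p s') = s' * ‖ee‖ := by
    rw [hp]
    simp only [dist_self_add_right, norm_smul, Real.norm_eq_abs, abs_of_nonneg hs'0]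
  rw [hdist]
  have hnee : ‖ee‖ = Real.sqrt c := by
    rw [EuclideanSpace.norm_eq]
    congr 1
    exact Finset.sum_congr rfl (fun i _ => by rw [Real.norm_eq_abs, sq_abs, sq])
  have hsq1 : 1 ≤ Real.sqrt c := by
    rw [show (1:ℝ) = Real.sqrt 1 by simp]
    exact Real.sqrt_le_sqrt hc1
  have hs'le : s' ≤ s₁ := hs'S.1.2
  have hsqc : Real.sqrt c * Real.sqrt c = c := Real.mul_self_sqrt hc0.le
  have hΔδ : Δ ≤ δ := hclose
  rw [hnee]
  calc s' * Real.sqrt c ≤ s₁ * Real.sqrt c := by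
        apply mul_le_mul_of_nonneg_right hs'le (Real.sqrt_nonneg c)
  _ ≤ δ := by
      rw [hs₁]
      rw [div_mul_eq_mul_div, div_le_iff₀ hc0]
      nlinarith [mul_le_mul_of_nonneg_right hΔδ (Real.sqrt_nonneg c),
        mul_le_mul_of_nonneg_left hsq1 (mul_nonneg hδ0 (Real.sqrt_nonneg c)), hsqc]



/-- Coefficient bound for a product of `X - C ρ` with all `|ρ| ≤ r`. -/
lemma coeff_small (r : ℝ) (hr0 : 0 < r) (s : Multiset ℂ)
    (hs : ∀ ρ ∈ s, Complex.abs ρ ≤ r) (j : ℕ) :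
    Complex.abs (((s.map (fun ρ => X - C ρ)).prod).coeff j) * r ^ j
      ≤ (Multiset.card s).choose j * r ^ (Multiset.card s) := by
  induction s using Multiset.induction generalizing j with
  | empty =>
    rcases j with _ | k
    · simp
    · simp [coeff_one]
  | @cons ρ s ih =>
    have hρ : Complex.abs ρ ≤ r := hs ρ (Multiset.mem_cons_self ρ s)
    have hs' : ∀ ρ' ∈ s, Complex.abs ρ' ≤ r := fun ρ' h => hs ρ' (Multiset.mem_cons_of_mem h)
    set P := ((s.map (fun ρ => X - C ρ)).prod) with hP
    have hprod : ((ρ ::ₘ s).map (fun ρ => X - C ρ)).prod = X * P - C ρ * P := by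
      rw [Multiset.map_cons, Multiset.prod_cons, sub_mul]
    set m := Multiset.card s with hm
    have hcard : Multiset.card (ρ ::ₘ s) = m + 1 := by simp [hm]
    rw [hprod, hcard]
    rcases j with _ | k
    · rw [coeff_sub, Polynomial.mul_coeff_zero, coeff_X_zero, zero_mul, zero_sub,
        map_neg_eq_map, coeff_C_mul]
      rw [map_mul]
      have h1 := ih hs' 0
      simp only [pow_zero, mul_one] at h1
      calc Complex.abs ρ * Complex.abs (P.coeff 0) * r ^ 0
          = Complex.abs ρ * Complex.abs (P.coeff 0) := by ring
        _ ≤ r * (m.choose 0 * r ^ m) :=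
            mul_le_mul hρ h1 (by positivity) hr0.le
        _ = (m+1).choose 0 * r ^ (m+1) := by simp [pow_succ]; ring
    · rw [coeff_sub, coeff_X_mul, coeff_C_mul]
      have h1 := ih hs' k
      have h2 := ih hs' (k+1)
      have habs : Complex.abs (P.coeff k - ρ * P.coeff (k+1))
          ≤ Complex.abs (P.coeff k) + Complex.abs ρ * Complex.abs (P.coeff (k+1)) := by
        calc _ ≤ Complex.abs (P.coeff k) + Complex.abs (ρ * P.coeff (k+1)) :=
              (AbsoluteValue.sub_le_add _ _ _)
          _ = _ := by rw [map_mul]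
      calc Complex.abs (P.coeff k - ρ * P.coeff (k+1)) * r ^ (k+1)
          ≤ (Complex.abs (P.coeff k) + Complex.abs ρ * Complex.abs (P.coeff (k+1))) * r ^ (k+1) :=
            mul_le_mul_of_nonneg_right habs (by positivity)
        _ = r * (Complex.abs (P.coeff k) * r ^ k)
            + Complex.abs ρ * (Complex.abs (P.coeff (k+1)) * r ^ (k+1)) := by ring
        _ ≤ r * (m.choose k * r ^ m) + r * (m.choose (k+1) * r ^ m) := by
            refine add_le_add (mul_le_mul_of_nonneg_left h1 hr0.le) ?_
            calc Complex.abs ρ * (Complex.abs (P.coeff (k+1)) * r ^ (k+1))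
                ≤ r * (Complex.abs (P.coeff (k+1)) * r ^ (k+1)) :=
                  mul_le_mul_of_nonneg_right hρ (by positivity)
              _ ≤ r * (m.choose (k+1) * r ^ m) := mul_le_mul_of_nonneg_left h2 hr0.le
        _ = ((m.choose k + m.choose (k+1) : ℕ)) * r ^ (m+1) := by push_cast; ring
        _ = (m+1).choose (k+1) * r ^ (m+1) := by rw [Nat.choose_succ_succ]
  
/-- Coefficient bound for a product of `X - C ρ` with all `|ρ| ≥ R ≥ 1`. -/
lemma coeff_large (R : ℝ) (hR : 1 ≤ R) (s : Multiset ℂ)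
    (hs : ∀ ρ ∈ s, R ≤ Complex.abs ρ) (j : ℕ) :
    Complex.abs (((s.map (fun ρ => X - C ρ)).prod).coeff j) * R ^ j
      ≤ (Multiset.card s).choose j * (s.map Complex.abs).prod := by
  induction s using Multiset.induction generalizing j with
  | empty =>
    rcases j with _ | k
    · simp
    · simp [coeff_one]
  | @cons ρ s ih =>
    have hρ : R ≤ Complex.abs ρ := hs ρ (Multiset.mem_cons_self ρ s)
    have hρ0 : (0:ℝ) ≤ Complex.abs ρ := norm_nonneg ρ
    have hs' : ∀ ρ' ∈ s, R ≤ Complex.abs ρ' := fun ρ' h => hs ρ' (Multiset.mem_cons_of_mem h)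
    set P := ((s.map (fun ρ => X - C ρ)).prod) with hP
    set π : ℝ := (s.map Complex.abs).prod with hπ
    have hπ0 : (0:ℝ) ≤ π := by
      rw [hπ]
      refine Multiset.prod_nonneg (fun x hx => ?_)
      obtain ⟨ρ', _, rfl⟩ := Multiset.mem_map.mp hx
      exact norm_nonneg ρ'
    have hπ' : ((ρ ::ₘ s).map Complex.abs).prod = Complex.abs ρ * π := by
      rw [Multiset.map_cons, Multiset.prod_cons]
    have hprod : ((ρ ::ₘ s).map (fun ρ => X - C ρ)).prod = X * P - C ρ * P := by
      rw [Multiset.map_cons, Multiset.prod_cons, sub_mul]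
    set m := Multiset.card s with hm
    have hcard : Multiset.card (ρ ::ₘ s) = m + 1 := by simp [hm]
    rw [hprod, hcard, hπ']
    rcases j with _ | k
    · rw [coeff_sub, Polynomial.mul_coeff_zero, coeff_X_zero, zero_mul, zero_sub,
        map_neg_eq_map, coeff_C_mul, map_mul]
      have h1 := ih hs' 0
      simp only [pow_zero, mul_one] at h1
      calc Complex.abs ρ * Complex.abs (P.coeff 0) * R ^ 0
          = Complex.abs ρ * Complex.abs (P.coeff 0) := by ring
        _ ≤ Complex.abs ρ * (m.choose 0 * π) := mul_le_mul_of_nonneg_left h1 hρ0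
        _ = (m+1).choose 0 * (Complex.abs ρ * π) := by simp [Nat.choose_zero_right]
    · rw [coeff_sub, coeff_X_mul, coeff_C_mul]
      have h1 := ih hs' k
      have h2 := ih hs' (k+1)
      have habs : Complex.abs (P.coeff k - ρ * P.coeff (k+1))
          ≤ Complex.abs (P.coeff k) + Complex.abs ρ * Complex.abs (P.coeff (k+1)) := by
        calc _ ≤ Complex.abs (P.coeff k) + Complex.abs (ρ * P.coeff (k+1)) :=
              (AbsoluteValue.sub_le_add _ _ _)
          _ = _ := by rw [map_mul]
      have hR0 : (0:ℝ) < R := lt_of_lt_of_le one_pos hR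
      calc Complex.abs (P.coeff k - ρ * P.coeff (k+1)) * R ^ (k+1)
          ≤ (Complex.abs (P.coeff k) + Complex.abs ρ * Complex.abs (P.coeff (k+1))) * R ^ (k+1) :=
            mul_le_mul_of_nonneg_right habs (by positivity)
        _ = R * (Complex.abs (P.coeff k) * R ^ k)
            + Complex.abs ρ * (Complex.abs (P.coeff (k+1)) * R ^ (k+1)) := by ring
        _ ≤ R * (m.choose k * π) + Complex.abs ρ * (m.choose (k+1) * π) := by
            refine add_le_add (mul_le_mul_of_nonneg_left h1 hR0.le)
              (mul_le_mul_of_nonneg_left h2 hρ0)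
        _ ≤ Complex.abs ρ * (m.choose k * π) + Complex.abs ρ * (m.choose (k+1) * π) := by
            refine add_le_add_left (mul_le_mul_of_nonneg_right hρ (by positivity)) _
        _ = ((m.choose k + m.choose (k+1) : ℕ)) * (Complex.abs ρ * π) := by push_cast; ring
        _ = (m+1).choose (k+1) * (Complex.abs ρ * π) := by rw [Nat.choose_succ_succ]

lemma coeff_zero_large (s : Multiset ℂ) :
    Complex.abs (((s.map (fun ρ => X - C ρ)).prod).coeff 0) = (s.map Complex.abs).prod := by
  rw [coeff_zero_eq_eval_zero, Polynomial.eval_multiset_prod]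
  rw [map_multiset_prod Complex.abs]
  congr 1
  rw [Multiset.map_map, Multiset.map_map]
  refine Multiset.map_congr rfl (fun ρ _ => ?_)
  simp

lemma choose_le_two_pow' (m j : ℕ) : ((m.choose j : ℕ) : ℝ) ≤ 2 ^ m := by
  have h : m.choose j ≤ 2 ^ m := by
    rcases le_or_gt j m with h | h
    · calc m.choose j ≤ ∑ k ∈ Finset.range (m+1), m.choose k :=
          Finset.single_le_sum (fun k _ => Nat.zero_le _) (Finset.mem_range.mpr (Nat.lt_succ_of_le h))
      _ = 2 ^ m := Nat.sum_range_choose m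
    · simp [Nat.choose_eq_zero_of_lt h]
  exact_mod_cast h

set_option maxHeartbeats 800000 in
/-- A polynomial with two maximal-size coefficients has a root in a fixed annulus. -/
lemma root_in_annulus (d : ℕ) (P : Polynomial ℂ) (hdeg : P.natDegree ≤ d)
    (c : ℝ) (hc : 0 < c) (i₁ i₂ : ℕ) (hne : i₁ ≠ i₂)
    (h1 : c ≤ Complex.abs (P.coeff i₁)) (h2 : c ≤ Complex.abs (P.coeff i₂))
    (hall : ∀ k, Complex.abs (P.coeff k) ≤ c) :
    ∃ w : ℂ, P.eval w = 0 ∧ (4 * ((d:ℝ)+1) * 4 ^ d + 4)⁻¹ ≤ Complex.abs w ∧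
      Complex.abs w ≤ 4 * ((d:ℝ)+1) * 4 ^ d + 4 := by
  classical
  set Jb : ℝ := ((d:ℝ)+1) * 4 ^ d with hJbdef
  have hJb0 : 0 < Jb := by positivity
  set R : ℝ := 4 * ((d:ℝ)+1) * 4 ^ d + 4 with hRdef
  have hRJb : R = 4 * Jb + 4 := by rw [hRdef, hJbdef]; ring
  have hR1 : (1:ℝ) ≤ R := by rw [hRJb]; linarith
  have hR0 : (0:ℝ) < R := lt_of_lt_of_le one_pos hR1
  set rr : ℝ := R⁻¹ with hrr
  have hrr0 : 0 < rr := inv_pos.mpr hR0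
  have hrr1 : rr ≤ 1 := by rw [hrr]; exact inv_le_one_of_one_le₀ hR1
  have hJbrr : Jb * rr ≤ 1/4 := by
    rw [hrr, mul_inv_le_iff₀ hR0, hRJb]; linarith
  by_contra hcon
  push_neg at hcon
  have hroots : ∀ ρ ∈ P.roots, Complex.abs ρ < rr ∨ R < Complex.abs ρ := by
    intro ρ hρ
    rcases lt_or_ge (Complex.abs ρ) rr with h | h
    · exact Or.inl h
    · exact Or.inr (hcon ρ (Polynomial.isRoot_of_mem_roots hρ) h)
  have hP0 : P ≠ 0 := by
    intro h
    rw [h] at h1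
    simp at h1
    linarith
  set lc := P.leadingCoeff with hlc
  have hlc0 : lc ≠ 0 := Polynomial.leadingCoeff_ne_zero.mpr hP0
  set small := P.roots.filter (fun ρ => Complex.abs ρ < rr) with hsmalldef
  set large := P.roots.filter (fun ρ => ¬ Complex.abs ρ < rr) with hlargedef
  have hsplit : small + large = P.roots := Multiset.filter_add_not _ _
  have hlargeR : ∀ ρ ∈ large, R ≤ Complex.abs ρ := by
    intro ρ hρ
    have hnot := Multiset.of_mem_filter hρ
    rcases hroots ρ (Multiset.mem_of_mem_filter hρ) with h | h
    · exact absurd h hnot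
    · exact h.le
  have hsmallr : ∀ ρ ∈ small, Complex.abs ρ ≤ rr := fun ρ hρ => (Multiset.of_mem_filter hρ).le
  set Sm := (small.map (fun ρ => X - C ρ)).prod with hSm
  set La := (large.map (fun ρ => X - C ρ)).prod with hLa
  set s := Multiset.card small with hs
  set l := Multiset.card large with hl
  set π : ℝ := (large.map Complex.abs).prod with hπ
  have hπ1 : (1:ℝ) ≤ π := by
    rw [hπ]
    refine Multiset.one_le_prod (fun x hx => ?_)
    obtain ⟨ρ, hρ, rfl⟩ := Multiset.mem_map.mp hx
    exact le_trans hR1 (hlargeR ρ hρ)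
  have hπ0 : (0:ℝ) < π := lt_of_lt_of_le one_pos hπ1
  -- degree facts
  have hcardroots : Multiset.card P.roots = P.natDegree := by
    exact (IsAlgClosed.splits P).natDegree_eq_card_roots.symm
  have hsl : s + l ≤ d := by
    have : s + l = Multiset.card P.roots := by
      rw [hs, hl, ← Multiset.card_add, hsplit]
    rw [this, hcardroots]; exact hdeg
  have hsd : s ≤ d := le_trans (Nat.le_add_right s l) hsl
  have hld : l ≤ d := le_trans (Nat.le_add_left l s) hsl
  -- factorization
  have hfact : P = C lc * (Sm * La) := by
    have h := (IsAlgClosed.splits P).eq_prod_roots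
    rw [← hsplit, Multiset.map_add, Multiset.prod_add] at h
    exact h
  have hcoeff : ∀ k, P.coeff k = lc * (Sm * La).coeff k := by
    intro k
    rw [hfact]
    simp [Polynomial.coeff_C_mul]
  have hSmMonic : Sm.Monic := monic_multiset_prod_of_monic _ _ (fun ρ _ => monic_X_sub_C ρ)
  have hSmdeg : Sm.natDegree = s := by
    rw [hSm, hs]
    have := Polynomial.natDegree_multiset_prod_X_sub_C_eq_card small
    simpa using this
  have hSmtop : Complex.abs (Sm.coeff s) = 1 := by
    rw [← hSmdeg, hSmMonic.coeff_natDegree]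
    simp
  have hLa0 : Complex.abs (La.coeff 0) = π := coeff_zero_large large
  -- individual coefficient bounds
  have hSmBound : ∀ a, a < s → Complex.abs (Sm.coeff a) ≤ 2 ^ d * rr := by
    intro a ha
    have h := coeff_small rr hrr0 small hsmallr a
    rw [← hs] at h
    have hseq : rr ^ s = rr ^ a * rr ^ (s - a) := by
      rw [← pow_add]
      congr 1
      omega
    rw [hseq] at h
    have h2 : Complex.abs (Sm.coeff a) ≤ (s.choose a) * rr ^ (s - a) := by
      have hpos : (0:ℝ) < rr ^ a := pow_pos hrr0 a
      have h' : Complex.abs (Sm.coeff a) * rr ^ a ≤ ((s.choose a) * rr ^ (s-a)) * rr ^ a := by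
        calc Complex.abs (Sm.coeff a) * rr ^ a ≤ (s.choose a) * (rr ^ a * rr ^ (s - a)) := h
        _ = ((s.choose a) * rr ^ (s-a)) * rr ^ a := by ring
      exact le_of_mul_le_mul_right h' hpos
    calc Complex.abs (Sm.coeff a) ≤ (s.choose a) * rr ^ (s - a) := h2
      _ ≤ 2 ^ d * rr := by
          have hch : ((s.choose a : ℕ) : ℝ) ≤ 2 ^ s := choose_le_two_pow' s a
          have hpow : rr ^ (s - a) ≤ rr := by
            have h1' : 1 ≤ s - a := by omega
            calc rr ^ (s-a) ≤ rr ^ 1 := pow_le_pow_of_le_one hrr0.le hrr1 h1'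
            _ = rr := pow_one rr
          have h2s : (2:ℝ) ^ s ≤ 2 ^ d := pow_le_pow_right₀ (by norm_num) hsd
          calc ((s.choose a):ℝ) * rr ^ (s-a) ≤ 2 ^ s * rr := by
                exact mul_le_mul hch hpow (by positivity) (by positivity)
            _ ≤ 2 ^ d * rr := mul_le_mul_of_nonneg_right h2s hrr0.le
  have hLaBound : ∀ b, Complex.abs (La.coeff b) ≤ 2 ^ d * π := by
    intro b
    have h := coeff_large R hR1 large hlargeR b
    rw [← hl, ← hπ] at h
    have hRb : (1:ℝ) ≤ R ^ b := one_le_pow₀ hR1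
    have : Complex.abs (La.coeff b) ≤ Complex.abs (La.coeff b) * R ^ b := by
      nlinarith [AbsoluteValue.nonneg Complex.abs (La.coeff b)]
    calc Complex.abs (La.coeff b) ≤ (l.choose b) * π := le_trans this h
      _ ≤ 2 ^ d * π := by
          have hch : ((l.choose b : ℕ) : ℝ) ≤ 2 ^ l := choose_le_two_pow' l b
          have h2s : (2:ℝ) ^ l ≤ 2 ^ d := pow_le_pow_right₀ (by norm_num) hld
          exact mul_le_mul_of_nonneg_right (le_trans hch h2s) hπ0.le
  have hLaBound1 : ∀ b, 1 ≤ b → Complex.abs (La.coeff b) ≤ 2 ^ d * π * rr := by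
    intro b hb
    have h := coeff_large R hR1 large hlargeR b
    rw [← hl, ← hπ] at h
    have hRb : R ≤ R ^ b := by
      calc R = R ^ 1 := (pow_one R).symm
      _ ≤ R ^ b := pow_le_pow_right₀ hR1 hb
    have h' : Complex.abs (La.coeff b) * R ≤ (l.choose b) * π := by
      calc Complex.abs (La.coeff b) * R ≤ Complex.abs (La.coeff b) * R ^ b :=
            mul_le_mul_of_nonneg_left hRb (AbsoluteValue.nonneg _ _)
      _ ≤ _ := h
    have hch : ((l.choose b : ℕ) : ℝ) ≤ 2 ^ l := choose_le_two_pow' l b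
    have h2s : (2:ℝ) ^ l ≤ 2 ^ d := pow_le_pow_right₀ (by norm_num) hld
    rw [← le_div_iff₀ hR0] at h'
    calc Complex.abs (La.coeff b) ≤ (l.choose b) * π / R := h'
      _ = (l.choose b) * π * rr := by rw [hrr]; ring
      _ ≤ 2 ^ d * π * rr := by
          have : ((l.choose b):ℝ) * π ≤ 2^d * π :=
            mul_le_mul_of_nonneg_right (le_trans hch h2s) hπ0.le
          exact mul_le_mul_of_nonneg_right this hrr0.le
  -- term bound
  have h4d : (4:ℝ) ^ d = 2 ^ d * 2 ^ d := by rw [← mul_pow]; norm_num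
  have hterm : ∀ x : ℕ × ℕ, x ≠ (s, 0) →
      Complex.abs (Sm.coeff x.1) * Complex.abs (La.coeff x.2) ≤ 4 ^ d * π * rr := by
    intro x hx
    rcases lt_trichotomy x.1 s with hlt | heq | hgt
    · calc Complex.abs (Sm.coeff x.1) * Complex.abs (La.coeff x.2)
          ≤ (2 ^ d * rr) * (2 ^ d * π) :=
            mul_le_mul (hSmBound x.1 hlt) (hLaBound x.2) (AbsoluteValue.nonneg _ _) (by positivity)
      _ = 4 ^ d * π * rr := by rw [h4d]; ring
    · have hb : 1 ≤ x.2 := by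
        rcases Nat.eq_zero_or_pos x.2 with h0 | h0
        · exfalso; apply hx; ext <;> simp [heq, h0]
        · exact h0
      calc Complex.abs (Sm.coeff x.1) * Complex.abs (La.coeff x.2)
          ≤ 1 * (2 ^ d * π * rr) := by
            rw [heq, hSmtop]
            exact mul_le_mul_of_nonneg_left (hLaBound1 x.2 hb) (by norm_num)
      _ ≤ 4 ^ d * π * rr := by
          rw [one_mul, h4d]
          have h1d : (1:ℝ) ≤ 2 ^ d := one_le_pow₀ (by norm_num)
          have base : (0:ℝ) ≤ 2 ^ d * π * rr := by positivity
          have := mul_le_mul_of_nonneg_right h1d base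
          linarith
    · have : Sm.coeff x.1 = 0 := by
        apply Polynomial.coeff_eq_zero_of_natDegree_lt
        rw [hSmdeg]; exact hgt
      rw [this]
      simp
      positivity
  -- upper bound for coefficients away from s
  have hK1 : ∀ k, k ≤ d → k ≠ s → Complex.abs (P.coeff k) ≤ Complex.abs lc * (Jb * π * rr) := by
    intro k hkd hks
    rw [hcoeff k, map_mul]
    refine mul_le_mul_of_nonneg_left ?_ (AbsoluteValue.nonneg _ _)
    rw [Polynomial.coeff_mul]
    calc Complex.abs (∑ x ∈ Finset.HasAntidiagonal.antidiagonal k, Sm.coeff x.1 * La.coeff x.2)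
        ≤ ∑ x ∈ Finset.HasAntidiagonal.antidiagonal k, Complex.abs (Sm.coeff x.1 * La.coeff x.2) :=
          Complex.abs.sum_le _ _
      _ ≤ ∑ _x ∈ Finset.HasAntidiagonal.antidiagonal k, (4 ^ d * π * rr) := by
          refine Finset.sum_le_sum (fun x hx => ?_)
          rw [map_mul]
          refine hterm x (fun h => hks ?_)
          have := Finset.HasAntidiagonal.mem_antidiagonal.mp hx
          rw [h] at this
          simpa using this.symm
      _ = (k + 1) * (4 ^ d * π * rr) := by
          rw [Finset.sum_const, Finset.Nat.card_antidiagonal]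
          push_cast; ring
      _ ≤ Jb * π * rr := by
          rw [hJbdef]
          have hk1 : ((k:ℝ) + 1) ≤ (d:ℝ) + 1 := by exact_mod_cast Nat.succ_le_succ hkd
          have base : (0:ℝ) ≤ 4 ^ d * π * rr := by positivity
          have := mul_le_mul_of_nonneg_right hk1 base
          linarith
  -- lower bound for coefficient s
  have hK2 : Complex.abs lc * (π - Jb * π * rr) ≤ Complex.abs (P.coeff s) := by
    rw [hcoeff s, map_mul]
    refine mul_le_mul_of_nonneg_left ?_ (AbsoluteValue.nonneg _ _)
    rw [Polynomial.coeff_mul]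
    have hmem : ((s, 0) : ℕ × ℕ) ∈ Finset.HasAntidiagonal.antidiagonal s := by
      rw [Finset.HasAntidiagonal.mem_antidiagonal]
      simp
    rw [← Finset.add_sum_erase _ _ hmem]
    have hrest : Complex.abs (∑ x ∈ (Finset.HasAntidiagonal.antidiagonal s).erase (s,0),
        Sm.coeff x.1 * La.coeff x.2) ≤ Jb * π * rr := by
      calc _ ≤ ∑ x ∈ (Finset.HasAntidiagonal.antidiagonal s).erase (s,0),
            Complex.abs (Sm.coeff x.1 * La.coeff x.2) := Complex.abs.sum_le _ _
        _ ≤ ∑ _x ∈ (Finset.HasAntidiagonal.antidiagonal s).erase (s,0), (4 ^ d * π * rr) := by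
            refine Finset.sum_le_sum (fun x hx => ?_)
            rw [map_mul]
            exact hterm x (Finset.ne_of_mem_erase hx)
        _ = (((Finset.HasAntidiagonal.antidiagonal s).erase (s,0)).card : ℝ) * (4 ^ d * π * rr) := by
            rw [Finset.sum_const]; push_cast; ring
        _ ≤ Jb * π * rr := by
            have hcard : ((Finset.HasAntidiagonal.antidiagonal s).erase (s,0)).card = s := by
              rw [Finset.card_erase_of_mem hmem, Finset.Nat.card_antidiagonal]
              omega
            rw [hcard, hJbdef]
            have hk1 : (s:ℝ) ≤ (d:ℝ) + 1 := by
              have : (s:ℝ) ≤ (d:ℝ) := by exact_mod_cast hsd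
              linarith
            have base : (0:ℝ) ≤ 4 ^ d * π * rr := by positivity
            have := mul_le_mul_of_nonneg_right hk1 base
            linarith
    have htop : Complex.abs (Sm.coeff s * La.coeff 0) = π := by
      rw [map_mul, hSmtop, hLa0, one_mul]
    calc π - Jb * π * rr
        ≤ Complex.abs (Sm.coeff s * La.coeff 0) - Complex.abs (∑ x ∈ (Finset.HasAntidiagonal.antidiagonal s).erase (s,0),
            Sm.coeff x.1 * La.coeff x.2) := by
          rw [htop]; linarith
      _ ≤ Complex.abs (Sm.coeff s * La.coeff 0 + ∑ x ∈ (Finset.HasAntidiagonal.antidiagonal s).erase (s,0),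
            Sm.coeff x.1 * La.coeff x.2) := by
          set X := Sm.coeff s * La.coeff 0
          set Y := ∑ x ∈ (Finset.HasAntidiagonal.antidiagonal s).erase (s,0), Sm.coeff x.1 * La.coeff x.2
          have habs2 : Complex.abs X ≤ Complex.abs (X + Y) + Complex.abs Y := by
            have h' : X = (X + Y) - Y := by ring
            calc Complex.abs X = Complex.abs ((X + Y) - Y) := by rw [← h']
            _ ≤ Complex.abs (X + Y) + Complex.abs Y := AbsoluteValue.sub_le_add _ _ _
          linarith
  -- pick a witness index different from s
  obtain ⟨i, hiA, his⟩ : ∃ i, (c ≤ Complex.abs (P.coeff i)) ∧ i ≠ s := by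
    rcases eq_or_ne i₁ s with h | h
    · exact ⟨i₂, h2, by rw [← h]; exact hne.symm⟩
    · exact ⟨i₁, h1, h⟩
  have hid : i ≤ d := by
    refine le_trans (Polynomial.le_natDegree_of_ne_zero (fun h => ?_)) hdeg
    rw [h] at hiA
    simp at hiA
    linarith
  set L : ℝ := Complex.abs lc * π with hL
  have hL0 : 0 < L := mul_pos (AbsoluteValue.pos _ hlc0) hπ0
  have hup : c ≤ L * (Jb * rr) := by
    refine le_trans hiA (le_trans (hK1 i hid his) (le_of_eq ?_))
    rw [hL]; ring
  have hlow : L * (1 - Jb * rr) ≤ c := by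
    refine le_trans (le_of_eq ?_) (le_trans hK2 (hall s))
    rw [hL]; ring
  have hm1 : L * (Jb * rr) ≤ L * (1/4) := mul_le_mul_of_nonneg_left hJbrr hL0.le
  have hm2 : L * (3/4) ≤ L * (1 - Jb * rr) :=
    mul_le_mul_of_nonneg_left (by linarith) hL0.le
  linarith


end Stmt1Aux

open Stmt1Aux

/-- The rescaled amoebas `(1/log t)·𝒜_t` converge to the tropical
amoeba `Π_ν` in the Hausdorff sense. -/
theorem statement1 (n : ℕ) (hn : 1 ≤ n) (A : Finset (Fin n → ℤ))
    (h0A : (0 : Fin n → ℤ) ∈ A) (ν : (Fin n → ℤ) → ℝ) (hν : ν 0 = 0) :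
    ∀ ε > (0 : ℝ), ∃ t₀ > (1 : ℝ), ∀ t ≥ t₀,
      (∀ z : Fin n → ℂ, (∀ i, z i ≠ 0) → Wfam A ν t z = 0 →
          ∃ v ∈ tropAmoeba A ν, dist (LogMap z) (Real.log t • v) ≤ ε * Real.log t) ∧
      (∀ v ∈ tropAmoeba A ν, ∃ z : Fin n → ℂ, (∀ i, z i ≠ 0) ∧ Wfam A ν t z = 0 ∧
          dist (LogMap z) (Real.log t • v) ≤ ε * Real.log t) := by
  classical
  intro ε hε
  have logmono : ∀ {x y : ℝ}, 0 < x → x ≤ y → Real.log x ≤ Real.log y :=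
    fun {x y} h h2 => (Real.log_le_log_iff h (lt_of_lt_of_le h h2)).mpr h2
  by_cases hA2 : A.card ≤ 1
  · -- trivial case : A = {0}
    have hA : A = {0} := by
      have h1 : ({0} : Finset (Fin n → ℤ)) ⊆ A := Finset.singleton_subset_iff.mpr h0A
      have h2 : A.card ≤ ({0} : Finset (Fin n → ℤ)).card := by
        rw [Finset.card_singleton]; exact hA2
      exact (Finset.eq_of_subset_of_card_le h1 h2).symm
    refine ⟨2, one_lt_two, fun t ht => ⟨?_, ?_⟩⟩
    · intro z hz hW
      exfalso
      have hthis : Wfam A ν t z = -1 := by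
        rw [Wfam, hA]
        rw [Finset.filter_singleton]
        simp
      rw [hW] at hthis
      exact absurd hthis.symm (by norm_num)
    · intro v hv
      exfalso
      obtain ⟨α, hα, β, hβ, hab, _⟩ := hv
      rw [hA, Finset.mem_singleton] at hα hβ
      exact hab (hα.trans hβ.symm)
  push_neg at hA2
  obtain ⟨e, he⟩ := exists_generic n A
  have hAne : A.Nonempty := ⟨0, h0A⟩
  set m : (Fin n → ℤ) → ℤ := fun γ => ∑ i, e i * γ i with hm
  have hI : (A.image m).Nonempty := hAne.image m
  set Kmin : ℤ := (A.image m).min' hI with hKmindef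
  set Kmax : ℤ := (A.image m).max' hI with hKmaxdef
  set D : ℕ := (Kmax - Kmin).toNat with hDdef
  set R : ℝ := 4 * ((D:ℝ)+1) * 4 ^ D + 4 with hRdef
  have hR1 : (1:ℝ) ≤ R := by
    have h : (0:ℝ) ≤ 4 * ((D:ℝ)+1) * 4 ^ D := by positivity
    rw [hRdef]; linarith
  have hRpos : (0:ℝ) < R := lt_of_lt_of_le one_pos hR1
  set CE : ℝ := Real.sqrt (∑ i, ((e i : ℝ))^2) with hCEdef
  have hCE0 : 0 ≤ CE := Real.sqrt_nonneg _
  set C₁ : ℝ := Real.log A.card with hC₁def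
  have hC₁0 : 0 ≤ C₁ := Real.log_nonneg (by exact_mod_cast hA2.le)
  set C₂ : ℝ := Real.log R * CE with hC₂def
  have hC₂0 : 0 ≤ C₂ := mul_nonneg (Real.log_nonneg hR1) hCE0
  set M0 : ℝ := max C₁ C₂ with hM0def
  refine ⟨max 2 (Real.exp (M0 / ε)), lt_of_lt_of_le one_lt_two (le_max_left _ _),
    fun t ht => ?_⟩
  have ht2 : 2 ≤ t := le_trans (le_max_left _ _) ht
  have ht1 : 1 < t := lt_of_lt_of_le one_lt_two ht2
  have ht0 : (0:ℝ) < t := lt_trans one_pos ht1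
  set L : ℝ := Real.log t with hLdef
  have hL0 : 0 < L := Real.log_pos ht1
  have hM0L : M0 ≤ ε * L := by
    have hexp : Real.exp (M0 / ε) ≤ t := le_trans (le_max_right _ _) ht
    have h := (Real.le_log_iff_exp_le ht0).mpr hexp
    rw [div_le_iff₀ hε] at h
    calc M0 ≤ L * ε := h
    _ = ε * L := mul_comm _ _
  constructor
  · -- direction 1 : points of the amoeba are near the tropical amoeba
    intro z hz hW
    set u : EuclideanSpace ℝ (Fin n) := LogMap z with hu
    set v : EuclideanSpace ℝ (Fin n) := L⁻¹ • u with hv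
    set T : (Fin n → ℤ) → ℂ := fun γ =>
      (if γ = 0 then (-1:ℂ) else ((t ^ (-ν γ) : ℝ) : ℂ)) * laurentMonomial γ z with hT
    have habsz : ∀ i, 0 < Complex.abs (z i) := fun i => AbsoluteValue.pos _ (hz i)
    have hui : ∀ i, u i = Real.log (Complex.abs (z i)) := fun i => rfl
    have hmon : ∀ γ : Fin n → ℤ,
        Complex.abs (laurentMonomial γ z) = Real.exp (∑ i, u i * (γ i : ℝ)) := by
      intro γ
      rw [laurentMonomial, map_prod, Real.exp_sum]
      refine Finset.prod_congr rfl (fun i _ => ?_)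
      rw [map_zpow₀]
      rw [← Real.rpow_intCast (Complex.abs (z i)) (γ i),
        Real.rpow_def_of_pos (habsz i)]
      rw [hui i]
    have hvi : ∀ i, v i = L⁻¹ * u i := fun i => rfl
    have hLtf : ∀ γ : Fin n → ℤ, L * tf ν γ v = (∑ i, u i * (γ i : ℝ)) - ν γ * L := by
      intro γ
      rw [tf]
      simp only [hvi]
      rw [mul_sub, Finset.mul_sum]
      have hterm : ∀ i ∈ Finset.univ, L * (L⁻¹ * u i * (γ i:ℝ)) = u i * (γ i:ℝ) := by
        intro i _
        field_simp
      rw [Finset.sum_congr rfl hterm]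
      ring
    have hTabs : ∀ γ, Complex.abs (T γ) = Real.exp (L * tf ν γ v) := by
      intro γ
      rw [hLtf γ]
      simp only [hT]
      by_cases hγ0 : γ = 0
      · subst hγ0
        rw [if_pos rfl, map_mul, hmon 0]
        simp [hν]
      · rw [if_neg hγ0, map_mul, Complex.abs_ofReal,
          abs_of_pos (Real.rpow_pos_of_pos ht0 _), hmon γ,
          Real.rpow_def_of_pos ht0, ← Real.exp_add]
        congr 1
        rw [← hLdef]
        ring
    have hsum : ∑ γ ∈ A, T γ = 0 := by
      rw [← hW, Wfam, ← Finset.add_sum_erase A T h0A]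
      congr 1
      · simp only [hT, if_pos rfl, laurentMonomial]
        simp
      · rw [← Finset.filter_ne']
        refine Finset.sum_congr rfl (fun γ hγ => ?_)
        simp only [hT]
        rw [if_neg (Finset.mem_filter.mp hγ).2]
    obtain ⟨α, hαA, hαmax⟩ := A.exists_max_image (fun γ => tf ν γ v) hAne
    have herase : (A.erase α).Nonempty := by
      rw [← Finset.card_pos, Finset.card_erase_of_mem hαA]
      omega
    obtain ⟨β, hβA', hβmax⟩ := (A.erase α).exists_max_image (fun γ => tf ν γ v) herase
    have hβA : β ∈ A := Finset.mem_of_mem_erase hβA'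
    have hβα : β ≠ α := Finset.ne_of_mem_erase hβA'
    have hTα : T α = - ∑ γ ∈ A.erase α, T γ := by
      have h := Finset.add_sum_erase A T hαA
      rw [hsum] at h
      linear_combination h
    have hcard0 : (0:ℝ) < (A.card : ℝ) := by exact_mod_cast Nat.zero_lt_of_lt hA2
    have hineq : Real.exp (L * tf ν α v) ≤ (A.card : ℝ) * Real.exp (L * tf ν β v) := by
      calc Real.exp (L * tf ν α v) = Complex.abs (T α) := (hTabs α).symm
      _ = Complex.abs (∑ γ ∈ A.erase α, T γ) := by rw [hTα, map_neg_eq_map]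
      _ ≤ ∑ γ ∈ A.erase α, Complex.abs (T γ) := Complex.abs.sum_le _ _
      _ ≤ ∑ _γ ∈ A.erase α, Real.exp (L * tf ν β v) := by
          refine Finset.sum_le_sum (fun γ hγ => ?_)
          rw [hTabs γ]
          exact Real.exp_le_exp.mpr (mul_le_mul_of_nonneg_left (hβmax γ hγ) hL0.le)
      _ = ((A.erase α).card : ℝ) * Real.exp (L * tf ν β v) := by
          rw [Finset.sum_const, nsmul_eq_mul]
      _ ≤ (A.card : ℝ) * Real.exp (L * tf ν β v) := by
          refine mul_le_mul_of_nonneg_right ?_ (Real.exp_pos _).le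
          exact_mod_cast Finset.card_le_card (Finset.erase_subset _ _)
    have hgap : tf ν α v - tf ν β v ≤ C₁ / L := by
      have hlog := logmono (Real.exp_pos _) hineq
      rw [Real.log_exp, Real.log_mul (ne_of_gt hcard0) (Real.exp_ne_zero _),
        Real.log_exp] at hlog
      rw [le_div_iff₀ hL0]
      rw [hC₁def]
      linarith [hlog]
    obtain ⟨w, hwTrop, hwd⟩ := near_trop A ν v α β hαA hβA (Ne.symm hβα) (C₁ / L) hαmax hgap
    refine ⟨w, hwTrop, ?_⟩
    have hvu : L • v = u := by rw [hv, smul_inv_smul₀ hL0.ne']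
    calc dist (LogMap z) (L • w) = dist (L • v) (L • w) := by rw [hvu]
    _ = ‖L‖ * dist v w := dist_smul₀ _ _ _
    _ = L * dist v w := by rw [Real.norm_eq_abs, abs_of_pos hL0]
    _ ≤ L * (C₁ / L) := mul_le_mul_of_nonneg_left hwd hL0.le
    _ = C₁ := by field_simp
    _ ≤ ε * L := le_trans (le_max_left _ _) hM0L
  · -- direction 2 : points of the tropical amoeba are near the amoeba
    rintro v ⟨α, hαA, β, hβA, hαβ, heqv, hmaxv⟩
    have heq' : tf ν α v = tf ν β v := heqv
    have hmax' : ∀ γ ∈ A, tf ν γ v ≤ tf ν α v := hmaxv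
    set cc : (Fin n → ℤ) → ℝ := fun γ => t ^ (tf ν γ v) with hccdef
    set sg : (Fin n → ℤ) → ℂ := fun γ => if γ = 0 then (-1:ℂ) else 1 with hsgdef
    have hsgabs : ∀ γ, Complex.abs (sg γ) = 1 := by
      intro γ
      rw [hsgdef]
      by_cases h : γ = 0 <;> simp [h]
    set idx : (Fin n → ℤ) → ℕ := fun γ => (m γ - Kmin).toNat with hidxdef
    have hKminle : ∀ γ ∈ A, Kmin ≤ m γ :=
      fun γ hγ => Finset.min'_le _ _ (Finset.mem_image_of_mem m hγ)
    have hKmaxge : ∀ γ ∈ A, m γ ≤ Kmax :=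
      fun γ hγ => Finset.le_max' _ _ (Finset.mem_image_of_mem m hγ)
    have hidxval : ∀ γ ∈ A, (idx γ : ℤ) = m γ - Kmin :=
      fun γ hγ => Int.toNat_of_nonneg (by linarith [hKminle γ hγ])
    have hidxinj : ∀ γ ∈ A, ∀ δ ∈ A, γ ≠ δ → idx γ ≠ idx δ := by
      intro γ hγ δ hδ hne h
      apply he γ hγ δ hδ hne
      have h2 : ((idx γ : ℕ) : ℤ) = ((idx δ : ℕ) : ℤ) := by exact_mod_cast h
      rw [hidxval γ hγ, hidxval δ hδ] at h2
      have : m γ = m δ := by linarith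
      exact this
    have hidxle : ∀ γ ∈ A, idx γ ≤ D := by
      intro γ hγ
      rw [hidxdef, hDdef]
      exact Int.toNat_le_toNat (by linarith [hKmaxge γ hγ])
    set P : Polynomial ℂ :=
      ∑ γ ∈ A, Polynomial.C (sg γ * (cc γ : ℂ)) * Polynomial.X ^ idx γ with hPdef
    have hdeg : P.natDegree ≤ D := by
      refine Polynomial.natDegree_sum_le_of_forall_le A _ (fun γ hγ => ?_)
      refine le_trans (Polynomial.natDegree_C_mul_le _ _) ?_
      rw [Polynomial.natDegree_X_pow]
      exact hidxle γ hγ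
    have hccpos : ∀ γ, 0 < cc γ := fun γ => Real.rpow_pos_of_pos ht0 _
    have hccle : ∀ γ ∈ A, cc γ ≤ cc α :=
      fun γ hγ => Real.rpow_le_rpow_of_exponent_le ht1.le (hmax' γ hγ)
    have hcoeffγ : ∀ γ₀ ∈ A, P.coeff (idx γ₀) = sg γ₀ * (cc γ₀ : ℂ) := by
      intro γ₀ hγ₀
      rw [hPdef, Polynomial.finset_sum_coeff]
      rw [Finset.sum_eq_single γ₀]
      · rw [Polynomial.coeff_C_mul, Polynomial.coeff_X_pow, if_pos rfl, mul_one]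
      · intro γ hγ hne
        rw [Polynomial.coeff_C_mul, Polynomial.coeff_X_pow,
          if_neg (Ne.symm (hidxinj γ hγ γ₀ hγ₀ hne)), mul_zero]
      · intro h
        exact absurd hγ₀ h
    have hcoeff_other : ∀ k, (∀ γ ∈ A, idx γ ≠ k) → P.coeff k = 0 := by
      intro k hk
      rw [hPdef, Polynomial.finset_sum_coeff]
      refine Finset.sum_eq_zero (fun γ hγ => ?_)
      rw [Polynomial.coeff_C_mul, Polynomial.coeff_X_pow, if_neg (Ne.symm (hk γ hγ)), mul_zero]
    have hallbound : ∀ k, Complex.abs (P.coeff k) ≤ cc α := by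
      intro k
      by_cases hk : ∃ γ ∈ A, idx γ = k
      · obtain ⟨γ, hγ, rfl⟩ := hk
        rw [hcoeffγ γ hγ, map_mul, hsgabs, one_mul, Complex.abs_ofReal,
          abs_of_pos (hccpos γ)]
        exact hccle γ hγ
      · push_neg at hk
        rw [hcoeff_other k hk]
        simpa using (hccpos α).le
    have hcα : Complex.abs (P.coeff (idx α)) = cc α := by
      rw [hcoeffγ α hαA, map_mul, hsgabs, one_mul, Complex.abs_ofReal,
        abs_of_pos (hccpos α)]
    have hcβ : Complex.abs (P.coeff (idx β)) = cc α := by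
      rw [hcoeffγ β hβA, map_mul, hsgabs, one_mul, Complex.abs_ofReal,
        abs_of_pos (hccpos β)]
      rw [hccdef]
      show t ^ (tf ν β v) = t ^ (tf ν α v)
      rw [heq']
    obtain ⟨w₀, hw0eval, hw0lo', hw0hi'⟩ := root_in_annulus D P hdeg (cc α) (hccpos α)
      (idx α) (idx β) (hidxinj α hαA β hβA hαβ) (le_of_eq hcα.symm) (le_of_eq hcβ.symm)
      hallbound
    have hw0lo : R⁻¹ ≤ Complex.abs w₀ := by rw [hRdef]; exact hw0lo'
    have hw0hi : Complex.abs w₀ ≤ R := by rw [hRdef]; exact hw0hi'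
    have hw0ne : w₀ ≠ 0 := by
      intro h
      rw [h] at hw0lo
      simp only [map_zero] at hw0lo
      have := inv_pos.mpr hRpos
      linarith
    set z : Fin n → ℂ := fun i => ((t ^ (v i) : ℝ) : ℂ) * w₀ ^ (e i) with hzdef
    have hzne : ∀ i, z i ≠ 0 := by
      intro i
      refine mul_ne_zero ?_ (zpow_ne_zero _ hw0ne)
      exact_mod_cast (Real.rpow_pos_of_pos ht0 (v i)).ne'
    have hmono : ∀ γ : Fin n → ℤ, laurentMonomial γ z
        = ((t ^ (∑ i, v i * (γ i : ℝ)) : ℝ) : ℂ) * w₀ ^ (m γ) := by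
      intro γ
      rw [laurentMonomial]
      have hfac : ∀ i : Fin n, (z i) ^ (γ i)
          = ((t ^ (v i * (γ i : ℝ)) : ℝ) : ℂ) * w₀ ^ (e i * γ i) := by
        intro i
        rw [hzdef]
        rw [mul_zpow]
        congr 1
        · rw [← Complex.ofReal_zpow]
          congr 1
          rw [← Real.rpow_intCast (t ^ (v i)) (γ i), ← Real.rpow_mul ht0.le]
        · rw [← zpow_mul]
      rw [Finset.prod_congr rfl (fun i _ => hfac i), Finset.prod_mul_distrib]
      congr 1
      · rw [← Complex.ofReal_prod, ← rpow_finset_sum t ht0]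
      · rw [← zpow_finset_sum w₀ hw0ne]
    have hWz : Wfam A ν t z = w₀ ^ Kmin * Polynomial.eval w₀ P := by
      have hterm : ∀ γ ∈ A, (sg γ * (cc γ : ℂ)) * w₀ ^ (m γ)
          = w₀ ^ Kmin * ((sg γ * (cc γ : ℂ)) * w₀ ^ (idx γ)) := by
        intro γ hγ
        have hmγ : m γ = Kmin + (idx γ : ℤ) := by rw [hidxval γ hγ]; ring
        rw [hmγ, zpow_add₀ hw0ne, zpow_natCast]
        ring
      have hsum2 : ∑ γ ∈ A, (sg γ * (cc γ : ℂ)) * w₀ ^ (m γ)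
          = w₀ ^ Kmin * Polynomial.eval w₀ P := by
        rw [Finset.sum_congr rfl hterm, ← Finset.mul_sum]
        congr 1
        rw [hPdef, Polynomial.eval_finset_sum]
        refine Finset.sum_congr rfl (fun γ _ => ?_)
        rw [Polynomial.eval_mul, Polynomial.eval_C, Polynomial.eval_pow, Polynomial.eval_X]
      rw [← hsum2, Wfam, ← Finset.add_sum_erase A _ h0A]
      congr 1
      · -- the γ = 0 term equals -1
        have hm0 : m 0 = 0 := by
          rw [hm]
          simp
        have htf0 : tf ν 0 v = 0 := by
          rw [tf]
          simp [hν]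
        rw [hsgdef]
        simp only [if_pos rfl]
        rw [hccdef]
        show (-1:ℂ) = (-1) * ((t ^ (tf ν (0 : Fin n → ℤ) v) : ℝ) : ℂ) * w₀ ^ (m 0)
        rw [htf0, hm0]
        simp
      · rw [← Finset.filter_ne']
        refine Finset.sum_congr rfl (fun γ hγ => ?_)
        have hγ0 : γ ≠ 0 := (Finset.mem_filter.mp hγ).2
        rw [hmono γ, hsgdef]
        simp only [if_neg hγ0, one_mul]
        rw [← mul_assoc, ← Complex.ofReal_mul, hccdef]
        show ((t ^ (-ν γ) * t ^ (∑ i, v i * (γ i:ℝ)) : ℝ) : ℂ) * w₀ ^ (m γ)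
          = ((t ^ (tf ν γ v) : ℝ) : ℂ) * w₀ ^ (m γ)
        rw [← Real.rpow_add ht0, tf]
        ring_nf
    refine ⟨z, hzne, by rw [hWz, hw0eval, mul_zero], ?_⟩
    -- distance estimate
    set lw : ℝ := Real.log (Complex.abs w₀) with hlwdef
    have hlog : ∀ i, LogMap z i = v i * L + (e i : ℝ) * lw := by
      intro i
      show Real.log (Complex.abs (z i)) = _
      rw [hzdef]
      show Real.log (Complex.abs (((t ^ (v i) : ℝ) : ℂ) * w₀ ^ (e i))) = _
      rw [map_mul, Complex.abs_ofReal, abs_of_pos (Real.rpow_pos_of_pos ht0 _), map_zpow₀]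
      rw [Real.log_mul (Real.rpow_pos_of_pos ht0 _).ne'
        (zpow_ne_zero _ (AbsoluteValue.pos Complex.abs hw0ne).ne')]
      rw [Real.log_rpow ht0, Real.log_zpow]
    have hlwabs : |lw| ≤ Real.log R := by
      have haw0 : 0 < Complex.abs w₀ := AbsoluteValue.pos _ hw0ne
      rw [abs_le]
      constructor
      · have h := logmono (inv_pos.mpr hRpos) hw0lo
        rwa [Real.log_inv] at h
      · rw [hlwdef]
        exact logmono haw0 hw0hi
    have hdisteq : dist (LogMap z) (L • v) = |lw| * CE := by
      rw [EuclideanSpace.dist_eq]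
      have hcoord : ∀ i, dist (LogMap z i) ((L • v) i) ^ 2 = ((e i:ℝ))^2 * lw^2 := by
        intro i
        have hsm : (L • v) i = L * v i := rfl
        rw [Real.dist_eq, hlog i, hsm]
        have harr : v i * L + (e i:ℝ) * lw - L * v i = (e i:ℝ) * lw := by ring
        rw [harr, sq_abs, mul_pow]
      rw [Finset.sum_congr rfl (fun i _ => hcoord i), ← Finset.sum_mul]
      rw [Real.sqrt_mul (by positivity) (lw^2), Real.sqrt_sq_eq_abs]
      rw [hCEdef]
      ring
    rw [hdisteq]
    calc |lw| * CE ≤ Real.log R * CE := mul_le_mul_of_nonneg_right hlwabs hCE0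
    _ = C₂ := hC₂def.symm
    _ ≤ ε * L := le_trans (le_max_right _ _) hM0L
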